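/- Let D, a, b, c1, c2, c3, c4 be integers and p a real number. Let s ≥ 0 be a real number with s² = D, and let u, v ≥ 0 be real numbers with u² = a + b·(1+s)/2 and v² = a + b·(1−s)/2. Define the complex numbers ω1 = (c1 + c2·(1+s)/2) + (c3 + c4·(1+s)/2)·u·i and ω3 = (c1 + c2·(1−s)/2) + (c3 + c4·(1−s)/2)·v·i, and suppose |ω1|² = p and |ω3|² = p. Set c = 2·c1 + c2. Then for every complex number X, (X − ω1)·(X − ω̄1)·(X − ω3)·(X − ω̄3) = X⁴ − 2·c·X³ + (2·p + c² − c2²·D)·X² − 2·c·p·X + p². -/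

import Mathlib

open Complex

/-- characteristic polynomial identity in the case D ≡ 1 (mod 4). -/
theorem stmt3 (D a b c1 c2 c3 c4 : ℤ) (p : ℝ)
    (s : ℝ) (hs0 : 0 ≤ s) (hs : s ^ 2 = (D : ℝ))
    (u v : ℝ) (hu0 : 0 ≤ u) (hv0 : 0 ≤ v)
    (hu : u ^ 2 = (a : ℝ) + (b : ℝ) * ((1 + s) / 2))
    (hv : v ^ 2 = (a : ℝ) + (b : ℝ) * ((1 - s) / 2))
    (ω1 ω3 : ℂ)
    (hω1 : ω1 = (((c1 : ℝ) + (c2 : ℝ) * ((1 + s) / 2) : ℝ) : ℂ)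
      + ((((c3 : ℝ) + (c4 : ℝ) * ((1 + s) / 2)) * u : ℝ) : ℂ) * Complex.I)
    (hω3 : ω3 = (((c1 : ℝ) + (c2 : ℝ) * ((1 - s) / 2) : ℝ) : ℂ)
      + ((((c3 : ℝ) + (c4 : ℝ) * ((1 - s) / 2)) * v : ℝ) : ℂ) * Complex.I)
    (habs1 : ‖ω1‖ ^ 2 = p) (habs3 : ‖ω3‖ ^ 2 = p)
    (c : ℤ) (hc : c = 2 * c1 + c2) :
    ∀ X : ℂ, (X - ω1) * (X - (starRingEnd ℂ) ω1) * (X - ω3) * (X - (starRingEnd ℂ) ω3)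
      = X ^ 4 - 2 * (c : ℂ) * X ^ 3
        + (2 * (p : ℂ) + (c : ℂ) ^ 2 - (c2 : ℂ) ^ 2 * (D : ℂ)) * X ^ 2
        - 2 * (c : ℂ) * (p : ℂ) * X + (p : ℂ) ^ 2 := by
  intro X
  set r1 : ℂ := (c1 : ℂ) + (c2 : ℂ) * ((1 + (s : ℂ)) / 2) with hr1
  set r3 : ℂ := (c1 : ℂ) + (c2 : ℂ) * ((1 - (s : ℂ)) / 2) with hr3
  have h1 : ω1 + (starRingEnd ℂ) ω1 = 2 * r1 := by
    rw [Complex.add_conj, hω1, hr1]; push_cast; simp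
  have h3 : ω3 + (starRingEnd ℂ) ω3 = 2 * r3 := by
    rw [Complex.add_conj, hω3, hr3]; push_cast; simp
  have m1 : ω1 * (starRingEnd ℂ) ω1 = (p : ℂ) := by
    rw [Complex.mul_conj, ← Complex.sq_norm, habs1]
  have m3 : ω3 * (starRingEnd ℂ) ω3 = (p : ℂ) := by
    rw [Complex.mul_conj, ← Complex.sq_norm, habs3]
  have e1 : (X - ω1) * (X - (starRingEnd ℂ) ω1) = X ^ 2 - 2 * r1 * X + (p : ℂ) := by
    linear_combination (-X) * h1 + m1
  have e3 : (X - ω3) * (X - (starRingEnd ℂ) ω3) = X ^ 2 - 2 * r3 * X + (p : ℂ) := by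
    linear_combination (-X) * h3 + m3
  have hsC : (s : ℂ) ^ 2 = (D : ℂ) := by exact_mod_cast congrArg Complex.ofReal hs
  have hcC : (c : ℂ) = 2 * (c1 : ℂ) + (c2 : ℂ) := by exact_mod_cast hc
  calc (X - ω1) * (X - (starRingEnd ℂ) ω1) * (X - ω3) * (X - (starRingEnd ℂ) ω3)
      = ((X - ω1) * (X - (starRingEnd ℂ) ω1)) * ((X - ω3) * (X - (starRingEnd ℂ) ω3)) := by ring
    _ = (X ^ 2 - 2 * r1 * X + (p : ℂ)) * (X ^ 2 - 2 * r3 * X + (p : ℂ)) := by rw [e1, e3]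
    _ = X ^ 4 - 2 * (c : ℂ) * X ^ 3
        + (2 * (p : ℂ) + (c : ℂ) ^ 2 - (c2 : ℂ) ^ 2 * (D : ℂ)) * X ^ 2
        - 2 * (c : ℂ) * (p : ℂ) * X + (p : ℂ) ^ 2 := by
        rw [hr1, hr3]
        linear_combination (2 * X ^ 3 + 2 * (p : ℂ) * X
            - ((c : ℂ) + 2 * (c1 : ℂ) + (c2 : ℂ)) * X ^ 2) * hcC
          + (-(c2 : ℂ) ^ 2 * X ^ 2) * hsC
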